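/- Let f(x) = Σ_k α_k T_k(x) be an ensemble regressor with weights satisfying Σ_k α_k = 1. Then for any input-label pair (x, y), the overall ensemble error (f(x) - y)² equals the weighted error Σ_k α_k (T_k(x) - y)² minus the diversity Σ_k α_k (T_k(x) - f(x))². -/
import Mathlib


/-- Krogh–Vedelsby ambiguity decomposition: Err = Err̄ - Div. -/
theorem ambiguity_decomposition {ι X : Type*} [Fintype ι]
    (α : ι → ℝ) (T : ι → X → ℝ) (x : X) (y : ℝ)
    (hα : ∑ k, α k = 1)
    (f : X → ℝ) (hf : ∀ z, f z = ∑ k, α k * T k z) :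
    (f x - y) ^ 2 =
      (∑ k, α k * (T k x - y) ^ 2) - (∑ k, α k * (T k x - f x) ^ 2) := by
  have hfx := hf x
  have key : ∀ k, α k * (T k x - y) ^ 2 - α k * (T k x - f x) ^ 2 =
      2 * (f x - y) * (α k * T k x) - ((f x) ^ 2 - y ^ 2) * α k := by
    intro k; ring
  rw [← Finset.sum_sub_distrib]
  simp_rw [key]
  rw [Finset.sum_sub_distrib, ← Finset.mul_sum, ← Finset.mul_sum, ← hfx, hα]
  ring
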